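/- arXiv:2502.19120 — 2 statements merged into one kernel-verified Lean document; each statement's English description precedes it below -/
import Mathlib

section
/- (Norm of a causal function's transform from its real part alone.) Let f ∈ L²(ℝ, ℂ) vanish almost everywhere on (−∞, 0). Then ∫_ℝ |𝔉f(ξ)|² dξ = 2 ∫_ℝ (Re 𝔉f(ξ))² dξ; equivalently, ‖𝔉f‖_{L²(ℝ)} = √2 · ‖Re 𝔉f‖_{L²(ℝ)}. -/
open MeasureTheory Complex Real

noncomputable section AuxCausal

lemma conj_lip : LipschitzWith 1 (fun z : ℂ => (starRingEnd ℂ) z) :=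
  Complex.isometry_conj.lipschitz

/-- pointwise conjugation on `L²(ℝ,ℂ)` -/
def conjL2 (g : Lp ℂ 2 (volume : Measure ℝ)) : Lp ℂ 2 (volume : Measure ℝ) :=
  conj_lip.compLp (map_zero _) g

lemma conjL2_coeFn (g : Lp ℂ 2 (volume : Measure ℝ)) :
    (conjL2 g : ℝ → ℂ) =ᵐ[volume] fun x => (starRingEnd ℂ) ((g : ℝ → ℂ) x) :=
  LipschitzWith.coeFn_compLp _ _ _

lemma conjL2_continuous : Continuous (conjL2) :=
  LipschitzWith.continuous_compLp conj_lip (map_zero _)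

/-- conj-reflection `x ↦ conj (g (-x))` on `L²(ℝ,ℂ)` -/
def reflL2 (g : Lp ℂ 2 (volume : Measure ℝ)) : Lp ℂ 2 (volume : Measure ℝ) :=
  conjL2 (Lp.compMeasurePreserving (Neg.neg)
    (Measure.measurePreserving_neg (volume : Measure ℝ)) g)

lemma reflL2_coeFn (g : Lp ℂ 2 (volume : Measure ℝ)) :
    (reflL2 g : ℝ → ℂ) =ᵐ[volume] fun x => (starRingEnd ℂ) ((g : ℝ → ℂ) (-x)) := by
  refine (conjL2_coeFn _).trans ?_
  filter_upwards [Lp.coeFn_compMeasurePreserving g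
    (Measure.measurePreserving_neg (volume : Measure ℝ))] with x hx
  rw [hx]; rfl

lemma reflL2_continuous : Continuous (reflL2) :=
  conjL2_continuous.comp (Lp.isometry_compMeasurePreserving
    (E := ℂ) (p := 2) (Measure.measurePreserving_neg (volume : Measure ℝ))).continuous

/-- integral form of the squared L² norm -/
lemma int_normsq (g : Lp ℂ 2 (volume : Measure ℝ)) :
    ∫ x : ℝ, ‖(g : ℝ → ℂ) x‖ ^ 2 = ‖g‖ ^ 2 := by
  rw [@norm_sq_eq_re_inner ℂ, MeasureTheory.L2.inner_def]
  rw [← integral_re (L2.integrable_inner g g)]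
  refine integral_congr_ae (Filter.Eventually.of_forall fun x => ?_)
  simp [inner, RCLike.inner_apply, ← Complex.sq_norm, Complex.normSq_apply]
  rw [Complex.sq_norm, Complex.normSq_apply]

lemma int_sq (g : Lp ℂ 2 (volume : Measure ℝ)) :
    Integrable (fun x : ℝ => ‖(g : ℝ → ℂ) x‖ ^ 2) volume := by
  have h := (Lp.memLp g).integrable_norm_rpow (by norm_num) (by norm_num)
  have h2 : ((2 : ENNReal).toReal) = ((2:ℕ) : ℝ) := by norm_num
  rw [h2] at h
  refine h.congr (Filter.Eventually.of_forall fun x => ?_)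
  simp [Real.rpow_natCast]

end AuxCausal

lemma simpleFunc_integrable (s : Lp.simpleFunc ℂ 2 (volume : Measure ℝ)) :
    Integrable ((s : Lp ℂ 2 (volume : Measure ℝ)) : ℝ → ℂ) volume := by
  have h1 : ⇑(Lp.simpleFunc.toSimpleFunc s) =ᵐ[volume]
      ((s : Lp ℂ 2 (volume : Measure ℝ)) : ℝ → ℂ) :=
    Lp.simpleFunc.toSimpleFunc_eq_toFun s
  have h2 : MemLp (Lp.simpleFunc.toSimpleFunc s) 2 volume :=
    (Lp.memLp (s : Lp ℂ 2 (volume : Measure ℝ))).ae_eq h1.symm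
  have h3 : Integrable (Lp.simpleFunc.toSimpleFunc s) volume :=
    (MeasureTheory.SimpleFunc.memLp_iff_integrable (by norm_num) (by norm_num)).mp h2
  exact h3.congr h1

/-- Norm of a causal function's transform from its real part alone.  Here `F` is the
Fourier–Plancherel transform on `L²(ℝ, ℂ)`: a unitary map agreeing on integrable functions with
`𝔉f(ξ) = ∫_ℝ e^{-2πixξ} f(x) dx`.  If `f ∈ L²(ℝ, ℂ)` vanishes a.e. on `(−∞, 0)`, then
`∫_ℝ |𝔉f(ξ)|² dξ = 2 ∫_ℝ (Re 𝔉f(ξ))² dξ`; equivalently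
`‖𝔉f‖_{L²} = √2 ‖Re 𝔉f‖_{L²}`. -/
theorem causal_norm_from_real_part
    (F : Lp ℂ 2 (volume : Measure ℝ) ≃ₗᵢ[ℂ] Lp ℂ 2 (volume : Measure ℝ))
    (hF : ∀ f : Lp ℂ 2 (volume : Measure ℝ), Integrable (f : ℝ → ℂ) volume →
      (F f : ℝ → ℂ) =ᵐ[volume]
        fun ξ : ℝ => ∫ x : ℝ, Complex.exp (-2 * Real.pi * x * ξ * Complex.I) * f x)
    (f : Lp ℂ 2 (volume : Measure ℝ))
    (hvanish : ∀ᵐ x : ℝ ∂volume, x < 0 → (f : ℝ → ℂ) x = 0) :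
    (∫ ξ : ℝ, ‖(F f : ℝ → ℂ) ξ‖ ^ 2) = 2 * ∫ ξ : ℝ, ((F f : ℝ → ℂ) ξ).re ^ 2 ∧
    Real.sqrt (∫ ξ : ℝ, ‖(F f : ℝ → ℂ) ξ‖ ^ 2) =
      Real.sqrt 2 * Real.sqrt (∫ ξ : ℝ, ((F f : ℝ → ℂ) ξ).re ^ 2) := by
  -- Step 1: for integrable h, F (reflL2 h) = conjL2 (F h)
  have step1 : ∀ h : Lp ℂ 2 (volume : Measure ℝ), Integrable (h : ℝ → ℂ) volume →
      F (reflL2 h) = conjL2 (F h) := by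
    intro h hInt
    have hIntR : Integrable ((reflL2 h : Lp ℂ 2 (volume : Measure ℝ)) : ℝ → ℂ) volume := by
      have : Integrable (fun x : ℝ => (starRingEnd ℂ) ((h : ℝ → ℂ) (-x))) volume := by
        have hneg : Integrable (((h : ℝ → ℂ)) ∘ (Neg.neg)) volume :=
          ((Measure.measurePreserving_neg (volume : Measure ℝ)).integrable_comp
            (Lp.aestronglyMeasurable h)).mpr hInt
        exact (Complex.conjCLE : ℂ →L[ℝ] ℂ).integrable_comp hneg
      exact this.congr (reflL2_coeFn h).symm
    refine Lp.ext ?_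
    filter_upwards [hF _ hIntR, hF h hInt, conjL2_coeFn (F h)] with ξ h1 h2 h3
    rw [h1, h3]
    have e1 : (∫ x : ℝ, Complex.exp (-2 * Real.pi * x * ξ * Complex.I) * (reflL2 h : ℝ → ℂ) x)
        = ∫ x : ℝ, Complex.exp (-2 * Real.pi * x * ξ * Complex.I) *
            (starRingEnd ℂ) ((h : ℝ → ℂ) (-x)) := by
      refine integral_congr_ae ?_
      filter_upwards [reflL2_coeFn h] with x hx
      rw [hx]
    have e2 : (∫ x : ℝ, Complex.exp (-2 * Real.pi * x * ξ * Complex.I) *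
            (starRingEnd ℂ) ((h : ℝ → ℂ) (-x)))
        = ∫ x : ℝ, (fun y : ℝ => (starRingEnd ℂ)
            (Complex.exp (-2 * Real.pi * y * ξ * Complex.I) * (h : ℝ → ℂ) y)) (-x) := by
      refine integral_congr_ae (Filter.Eventually.of_forall fun x => ?_)
      simp only [map_mul]
      congr 1
      rw [← Complex.exp_conj]
      congr 1
      push_cast
      simp only [map_mul, map_neg, Complex.conj_ofReal, Complex.conj_I, map_ofNat]
      ring
    have e3 := MeasureTheory.integral_neg_eq_self
      (fun y : ℝ => (starRingEnd ℂ)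
        (Complex.exp (-2 * Real.pi * y * ξ * Complex.I) * (h : ℝ → ℂ) y)) volume
    rw [e1, e2, e3, integral_conj, ← h2]
  -- Step 2: operator identity on all of L²
  have key : F (reflL2 f) = conjL2 (F f) := by
    have hd := MeasureTheory.Lp.simpleFunc.denseRange
      (E := ℂ) (μ := (volume : Measure ℝ)) (p := 2) (by norm_num)
    have heq : (fun h => F (reflL2 h)) = fun h => conjL2 (F h) := by
      refine hd.equalizer ((F.continuous).comp reflL2_continuous)
        (conjL2_continuous.comp F.continuous) ?_
      funext s
      exact step1 _ (simpleFunc_integrable s)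
    exact congrFun heq f
  -- a.e. description of F (f + reflL2 f)
  have hsum : (F (f + reflL2 f) : ℝ → ℂ) =ᵐ[volume]
      fun ξ => ((F f : ℝ → ℂ) ξ) + (starRingEnd ℂ) ((F f : ℝ → ℂ) ξ) := by
    have hmap : F (f + reflL2 f) = F f + F (reflL2 f) := map_add F f (reflL2 f)
    rw [hmap, key]
    filter_upwards [Lp.coeFn_add (F f) (conjL2 (F f)), conjL2_coeFn (F f)] with ξ h1 h2
    rw [h1, Pi.add_apply, h2]
  -- Plancherel in integral form
  have A : ∫ ξ : ℝ, ‖(F f : ℝ → ℂ) ξ‖ ^ 2 = ∫ x : ℝ, ‖(f : ℝ → ℂ) x‖ ^ 2 := by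
    rw [int_normsq, int_normsq, F.norm_map]
  have B : ∫ ξ : ℝ, ‖(F (f + reflL2 f) : ℝ → ℂ) ξ‖ ^ 2
      = ∫ x : ℝ, ‖((f + reflL2 f : Lp ℂ 2 (volume : Measure ℝ)) : ℝ → ℂ) x‖ ^ 2 := by
    rw [int_normsq, int_normsq, F.norm_map]
  have Bl : ∫ ξ : ℝ, ‖(F (f + reflL2 f) : ℝ → ℂ) ξ‖ ^ 2
      = ∫ ξ : ℝ, 4 * ((F f : ℝ → ℂ) ξ).re ^ 2 := by
    refine integral_congr_ae ?_
    filter_upwards [hsum] with ξ hξ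
    rw [hξ, Complex.add_conj, Complex.norm_real, Real.norm_eq_abs, _root_.sq_abs]
    ring
  -- disjoint supports
  have hvanish2 : ∀ᵐ x : ℝ ∂volume, -x < 0 → (f : ℝ → ℂ) (-x) = 0 :=
    (Measure.measurePreserving_neg (volume : Measure ℝ)).quasiMeasurePreserving.ae hvanish
  have hne : ∀ᵐ x : ℝ ∂volume, x ≠ 0 := by
    rw [ae_iff]
    simp only [ne_eq, not_not, Set.setOf_eq_eq_singleton]
    exact Real.volume_singleton
  have Br : ∫ x : ℝ, ‖((f + reflL2 f : Lp ℂ 2 (volume : Measure ℝ)) : ℝ → ℂ) x‖ ^ 2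
      = ∫ x : ℝ, (‖(f : ℝ → ℂ) x‖ ^ 2 + ‖(reflL2 f : ℝ → ℂ) x‖ ^ 2) := by
    refine integral_congr_ae ?_
    filter_upwards [Lp.coeFn_add f (reflL2 f), hvanish, hvanish2, reflL2_coeFn f, hne]
      with x hadd h1 h2 h3 h4
    rw [hadd, Pi.add_apply]
    rcases lt_trichotomy x 0 with hx | hx | hx
    · rw [h1 hx]; simp
    · exact absurd hx h4
    · have : (f : ℝ → ℂ) (-x) = 0 := h2 (by linarith)
      rw [h3, this]; simp
  have Brefl : ∫ x : ℝ, ‖(reflL2 f : ℝ → ℂ) x‖ ^ 2 = ∫ x : ℝ, ‖(f : ℝ → ℂ) x‖ ^ 2 := by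
    have e1 : ∫ x : ℝ, ‖(reflL2 f : ℝ → ℂ) x‖ ^ 2
        = ∫ x : ℝ, (fun y : ℝ => ‖(f : ℝ → ℂ) y‖ ^ 2) (-x) := by
      refine integral_congr_ae ?_
      filter_upwards [reflL2_coeFn f] with x hx
      rw [hx]; simp
    rw [e1]
    exact MeasureTheory.integral_neg_eq_self (fun y : ℝ => ‖(f : ℝ → ℂ) y‖ ^ 2) volume
  have Bsplit : ∫ x : ℝ, (‖(f : ℝ → ℂ) x‖ ^ 2 + ‖(reflL2 f : ℝ → ℂ) x‖ ^ 2)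
      = (∫ x : ℝ, ‖(f : ℝ → ℂ) x‖ ^ 2) + ∫ x : ℝ, ‖(reflL2 f : ℝ → ℂ) x‖ ^ 2 :=
    integral_add (int_sq f) (int_sq (reflL2 f))
  have B4 : ∫ ξ : ℝ, 4 * ((F f : ℝ → ℂ) ξ).re ^ 2
      = 4 * ∫ ξ : ℝ, ((F f : ℝ → ℂ) ξ).re ^ 2 := integral_const_mul 4 _
  have part1 : (∫ ξ : ℝ, ‖(F f : ℝ → ℂ) ξ‖ ^ 2)
      = 2 * ∫ ξ : ℝ, ((F f : ℝ → ℂ) ξ).re ^ 2 := by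
    have hc : 4 * (∫ ξ : ℝ, ((F f : ℝ → ℂ) ξ).re ^ 2)
        = 2 * ∫ ξ : ℝ, ‖(F f : ℝ → ℂ) ξ‖ ^ 2 := by
      rw [← B4, ← Bl, B, Br, Bsplit, Brefl, A]; ring
    linarith
  exact ⟨part1, by rw [part1, Real.sqrt_mul (by norm_num : (0:ℝ) ≤ 2)]⟩
end

section
/- (Titchmarsh relations for causal functions.) Let f ∈ L²(ℝ, ℂ) be real-valued almost everywhere and vanish almost everywhere on (−∞, 0). Then the real and imaginary parts of its Fourier–Plancherel transform are related by the Hilbert transform: Im 𝔉f = −H(Re 𝔉f) and Re 𝔉f = H(Im 𝔉f) as elements of L²(ℝ) (with the stated conventions for 𝔉 and H). -/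
open MeasureTheory Complex Real

open MeasureTheory Complex Real FourierTransform
open scoped Convolution ENNReal ContDiff

noncomputable section TitchAux

namespace TitchAux

/-- The reflection operator on L². -/
def R : Lp ℂ 2 (volume : Measure ℝ) →+ Lp ℂ 2 (volume : Measure ℝ) :=
  Lp.compMeasurePreserving Neg.neg (Measure.measurePreserving_neg _)

lemma coeFn_R (g : Lp ℂ 2 (volume : Measure ℝ)) :
    (R g : ℝ → ℂ) =ᵐ[volume] fun x => g (-x) :=
  Lp.coeFn_compMeasurePreserving g (Measure.measurePreserving_neg _)

lemma continuous_R : Continuous (R : Lp ℂ 2 (volume : Measure ℝ) →+ _) :=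
  (Lp.isometry_compMeasurePreserving (Measure.measurePreserving_neg _)).continuous

/-- Conjugation on L², as a real continuous linear map. -/
def C : Lp ℂ 2 (volume : Measure ℝ) →L[ℝ] Lp ℂ 2 (volume : Measure ℝ) :=
  (Complex.conjCLE.toContinuousLinearMap).compLpL 2 volume

lemma coeFn_C (g : Lp ℂ 2 (volume : Measure ℝ)) :
    (C g : ℝ → ℂ) =ᵐ[volume] fun x => (starRingEnd ℂ) (g x) :=
  ContinuousLinearMap.coeFn_compLpL _ _

lemma fourier_formula (ψ : ℝ → ℂ) (ξ : ℝ) :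
    𝓕 ψ ξ = ∫ x : ℝ, Complex.exp (-2 * Real.pi * x * ξ * Complex.I) * ψ x := by
  rw [Real.fourier_real_eq_integral_exp_smul]
  congr 1
  ext x
  rw [smul_eq_mul]
  push_cast
  ring_nf

lemma fourier_conj (ψ : ℝ → ℂ) (ξ : ℝ) :
    𝓕 (fun x => (starRingEnd ℂ) (ψ x)) ξ = (starRingEnd ℂ) (𝓕 ψ (-ξ)) := by
  rw [Real.fourier_real_eq_integral_exp_smul,
    Real.fourier_real_eq_integral_exp_smul, ← integral_conj]
  refine integral_congr_ae (Filter.Eventually.of_forall fun x => ?_)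
  simp only [smul_eq_mul, map_mul, ← Complex.exp_conj]
  rw [Complex.conj_ofReal, Complex.conj_I]
  congr 1
  push_cast
  ring

lemma fourier_invol (ψ : ℝ → ℂ) (hc : Continuous ψ) (hi : Integrable ψ)
    (hfi : Integrable (𝓕 ψ)) (x : ℝ) : 𝓕 (𝓕 ψ) x = ψ (-x) := by
  have h := hi.fourierInv_fourier_eq hfi (hc.continuousAt (x := -x))
  rw [Real.fourierInv_eq_fourier_neg, neg_neg] at h
  exact h


section Dense2

open Metric Set

lemma smooth_approx (φ : ℝ → ℂ) (hφc : Continuous φ) (hφs : HasCompactSupport φ)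
    {δ : ℝ} (hδ : 0 < δ) :
    ∃ ψ : ℝ → ℂ, ContDiff ℝ ∞ ψ ∧ HasCompactSupport ψ ∧
      eLpNorm (fun x => φ x - ψ x) 2 volume ≤ ENNReal.ofReal δ := by
  classical
  set K : Set ℝ := cthickening 1 (tsupport φ) with hK
  have hKc : IsCompact K := hφs.cthickening
  have hKm : MeasurableSet K := isClosed_cthickening.measurableSet
  have hKfin : volume K < ⊤ := hKc.measure_lt_top
  -- choose δ' > 0 with δ' * (volume K).toReal ^ (2:ℝ)⁻¹ ≤ δ
  set M : ℝ := (volume K).toReal ^ ((2:ℝ)⁻¹) with hM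
  have hM0 : 0 ≤ M := Real.rpow_nonneg ENNReal.toReal_nonneg _
  set δ' : ℝ := δ / (M + 1) with hδ'def
  have hδ'0 : 0 < δ' := div_pos hδ (by linarith)
  -- uniform continuity of φ on the compact set K
  have hUC : UniformContinuousOn φ K := hKc.uniformContinuousOn_of_continuous hφc.continuousOn
  rw [Metric.uniformContinuousOn_iff] at hUC
  obtain ⟨r, hr0, hr⟩ := hUC δ' hδ'0
  -- the bump function
  set ρ : ℝ := min r 1 with hρdef
  have hρ0 : 0 < ρ := lt_min hr0 one_pos
  have hρ1 : ρ ≤ 1 := min_le_right _ _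
  have hρr : ρ ≤ r := min_le_left _ _
  set k : ContDiffBump (0:ℝ) := ⟨ρ/2, ρ, by positivity, by linarith⟩ with hkdef
  set ψ : ℝ → ℂ := (k.normed volume) ⋆[ContinuousLinearMap.lsmul ℝ ℝ, volume] φ with hψdef
  have hksupport : HasCompactSupport (k.normed volume) := k.hasCompactSupport_normed
  have hψsm : ContDiff ℝ ∞ ψ :=
    hksupport.contDiff_convolution_left _ k.contDiff_normed hφc.locallyIntegrable
  have hψs : HasCompactSupport ψ := hksupport.convolution _ hφs
  -- pointwise bound
  have hbd : ∀ x : ℝ, dist (ψ x) (φ x) ≤ δ' := by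
    intro x
    refine k.dist_normed_convolution_le hφc.aestronglyMeasurable (fun y hy => ?_)
    by_cases hx : x ∈ tsupport φ
    · have hxK : x ∈ K := self_subset_cthickening _ hx
      have hyK : y ∈ K := by
        refine thickening_subset_cthickening _ _ ?_
        rw [mem_thickening_iff]
        exact ⟨x, hx, lt_of_lt_of_le (mem_ball.1 hy) hρ1⟩
      exact (hr y hyK x hxK (lt_of_lt_of_le (mem_ball.1 hy) hρr)).le
    · by_cases hy' : y ∈ tsupport φ
      · have hyK : y ∈ K := self_subset_cthickening _ hy'
        have hxK : x ∈ K := by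
          refine thickening_subset_cthickening _ _ ?_
          rw [mem_thickening_iff]
          refine ⟨y, hy', ?_⟩
          rw [dist_comm]
          exact lt_of_lt_of_le (mem_ball.1 hy) hρ1
        exact (hr y hyK x hxK (lt_of_lt_of_le (mem_ball.1 hy) hρr)).le
      · have h1 : φ x = 0 := image_eq_zero_of_notMem_tsupport hx
        have h2 : φ y = 0 := image_eq_zero_of_notMem_tsupport hy'
        simp [h1, h2, hδ'0.le]
  -- support of ψ is inside K
  have hψK : Function.support ψ ⊆ K := by
    refine Set.Subset.trans (support_convolution_subset (ContinuousLinearMap.lsmul ℝ ℝ)) ?_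
    rintro z ⟨a, ha, b, hb, rfl⟩
    refine thickening_subset_cthickening _ _ ?_
    rw [mem_thickening_iff]
    refine ⟨b, subset_tsupport φ hb, ?_⟩
    rw [k.support_normed_eq] at ha
    have : dist (a + b) b = ‖a‖ := by
      rw [dist_eq_norm]; congr 1; ring
    rw [this]
    exact lt_of_lt_of_le (mem_ball_zero_iff.1 ha) hρ1
  refine ⟨ψ, hψsm, hψs, ?_⟩
  -- eLpNorm estimate
  have hmono : ∀ x : ℝ, ‖φ x - ψ x‖ ≤ ‖K.indicator (fun _ => (δ' : ℂ)) x‖ := by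
    intro x
    by_cases hx : x ∈ K
    · rw [indicator_of_mem hx]
      have : ‖φ x - ψ x‖ = dist (ψ x) (φ x) := by rw [dist_comm, dist_eq_norm]
      rw [this]
      refine (hbd x).trans ?_
      rw [Complex.norm_real, Real.norm_eq_abs, abs_of_pos hδ'0]
    · rw [indicator_of_notMem hx]
      have h1 : φ x = 0 := by
        refine image_eq_zero_of_notMem_tsupport fun hc => hx (self_subset_cthickening _ hc)
      have h2 : ψ x = 0 := by
        by_contra h
        exact hx (hψK h)
      simp [h1, h2]
  refine (eLpNorm_mono hmono).trans ?_
  rw [eLpNorm_indicator_const hKm (by norm_num) (by norm_num)]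
  have htoReal : (2 : ℝ≥0∞).toReal = 2 := by norm_num
  rw [htoReal]
  have h1 : ‖(δ' : ℂ)‖ₑ = ENNReal.ofReal δ' := by
    rw [← ofReal_norm, Complex.norm_real, Real.norm_eq_abs, abs_of_pos hδ'0]
  have h2 : volume K ^ ((1:ℝ)/2) = ENNReal.ofReal M := by
    rw [hM]
    conv_lhs => rw [← ENNReal.ofReal_toReal hKfin.ne]
    rw [← ENNReal.ofReal_rpow_of_nonneg ENNReal.toReal_nonneg (by norm_num)]
    norm_num
  rw [h1, h2, ← ENNReal.ofReal_mul hδ'0.le]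
  refine ENNReal.ofReal_le_ofReal ?_
  rw [hδ'def]
  rw [div_mul_eq_mul_div, div_le_iff₀ (by linarith)]
  nlinarith

/-- The "nice" elements of L²: those with a representative that is continuous, integrable,
and has integrable Fourier transform. -/
def Nice (g : Lp ℂ 2 (volume : Measure ℝ)) : Prop :=
  ∃ ψ : ℝ → ℂ, Continuous ψ ∧ Integrable ψ ∧ Integrable (𝓕 ψ) ∧ (g : ℝ → ℂ) =ᵐ[volume] ψ

/-- A smooth compactly supported function, as a Schwartz map. -/
def toSchwartz (ψ : ℝ → ℂ) (hsm : ContDiff ℝ ∞ ψ) (hs : HasCompactSupport ψ) :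
    SchwartzMap ℝ ℂ where
  toFun := ψ
  smooth' := hsm
  decay' := by
    intro k n
    have hsupp : HasCompactSupport (fun x : ℝ => ‖x‖ ^ k * ‖iteratedFDeriv ℝ n ψ x‖) := by
      apply HasCompactSupport.mul_left
      exact (hs.iteratedFDeriv n).norm
    have hcont : Continuous (fun x : ℝ => ‖x‖ ^ k * ‖iteratedFDeriv ℝ n ψ x‖) := by
      exact ((continuous_norm.pow k).mul
        (hsm.continuous_iteratedFDeriv (by exact_mod_cast le_top)).norm)
    obtain ⟨C, hC⟩ := hcont.bounded_above_of_compact_support hsupp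
    exact ⟨C, fun x => (Real.le_norm_self _).trans (hC x)⟩

lemma dense_nice : Dense {g : Lp ℂ 2 (volume : Measure ℝ) | Nice g} := by
  rw [Metric.dense_iff]
  intro g ε hε
  have hε3 : (0:ℝ) < ε / 3 := by linarith
  obtain ⟨φ, hφs, hφe, hφc, hφmem⟩ :=
    (Lp.memLp g).exists_hasCompactSupport_eLpNorm_sub_le (p := 2)
      (by norm_num) (ε := ENNReal.ofReal (ε / 3)) (by simp [hε3, ENNReal.ofReal_eq_zero, not_le])
  obtain ⟨ψ, hψsm, hψs, hψe⟩ := smooth_approx φ hφc hφs hε3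
  set S : SchwartzMap ℝ ℂ := toSchwartz ψ hψsm hψs with hS
  have hψi : Integrable ψ := S.integrable
  have hψfi : Integrable (𝓕 ψ) := by
    have : 𝓕 ψ = ((SchwartzMap.fourierTransformCLE ℝ (SchwartzMap ℝ ℂ)) S : ℝ → ℂ) := by
      rfl
    rw [this]
    exact ((SchwartzMap.fourierTransformCLE ℝ (SchwartzMap ℝ ℂ)) S).integrable
  have hψmem : MemLp ψ 2 (volume : Measure ℝ) :=
    hψsm.continuous.memLp_of_hasCompactSupport (μ := volume) hψs
  refine ⟨hψmem.toLp ψ, ?_, ψ, hψsm.continuous, hψi, hψfi, hψmem.coeFn_toLp⟩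
  rw [Metric.mem_ball, dist_comm, Lp.dist_def]
  have h1 : eLpNorm ((g : ℝ → ℂ) - (hψmem.toLp ψ : ℝ → ℂ)) 2 volume
      = eLpNorm ((fun x => (g : ℝ → ℂ) x - φ x) + fun x => φ x - ψ x) 2 volume := by
    apply eLpNorm_congr_ae
    filter_upwards [hψmem.coeFn_toLp] with x hx
    simp [hx]
  calc (eLpNorm ((g : ℝ → ℂ) - (hψmem.toLp ψ : ℝ → ℂ)) 2 volume).toReal
      = (eLpNorm ((fun x => (g : ℝ → ℂ) x - φ x) + fun x => φ x - ψ x) 2 volume).toReal := by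
        rw [h1]
    _ ≤ (eLpNorm (fun x => (g : ℝ → ℂ) x - φ x) 2 volume
        + eLpNorm (fun x => φ x - ψ x) 2 volume).toReal := by
        apply ENNReal.toReal_mono
        · exact ENNReal.add_ne_top.2 ⟨by
            refine lt_of_le_of_lt ?_ (ENNReal.ofReal_lt_top (r := ε/3)) |>.ne
            exact hφe, by
            refine lt_of_le_of_lt ?_ (ENNReal.ofReal_lt_top (r := ε/3)) |>.ne
            exact hψe⟩
        · exact eLpNorm_add_le ((Lp.aestronglyMeasurable g).sub hφc.aestronglyMeasurable)
            (hφc.aestronglyMeasurable.sub hψsm.continuous.aestronglyMeasurable) (by norm_num)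
    _ ≤ (ENNReal.ofReal (ε/3) + ENNReal.ofReal (ε/3)).toReal := by
        apply ENNReal.toReal_mono
        · simp
        · exact add_le_add hφe hψe
    _ < ε := by
        rw [← ENNReal.ofReal_add hε3.le hε3.le, ENNReal.toReal_ofReal (by linarith)]
        linarith

end Dense2

section Ops

lemma ae_comp_neg {p : ℝ → Prop} (h : ∀ᵐ x : ℝ ∂volume, p x) :
    ∀ᵐ x : ℝ ∂volume, p (-x) :=
  (Measure.measurePreserving_neg (volume : Measure ℝ)).quasiMeasurePreserving.ae h

variable (F : Lp ℂ 2 (volume : Measure ℝ) ≃ₗᵢ[ℂ] Lp ℂ 2 (volume : Measure ℝ))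
  (hF : ∀ f : Lp ℂ 2 (volume : Measure ℝ), Integrable (f : ℝ → ℂ) volume →
      (F f : ℝ → ℂ) =ᵐ[volume]
        fun ξ : ℝ => ∫ x : ℝ, Complex.exp (-2 * Real.pi * x * ξ * Complex.I) * f x)

include hF

lemma bridge {g : Lp ℂ 2 (volume : Measure ℝ)} {ψ : ℝ → ℂ}
    (hg : (g : ℝ → ℂ) =ᵐ[volume] ψ) (hi : Integrable ψ) :
    (F g : ℝ → ℂ) =ᵐ[volume] 𝓕 ψ := by
  have hgi : Integrable (g : ℝ → ℂ) volume := hi.congr hg.symm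
  filter_upwards [hF g hgi] with ξ hξ
  rw [hξ, fourier_formula]
  refine integral_congr_ae ?_
  filter_upwards [hg] with x hx
  rw [hx]

lemma F_F (g : Lp ℂ 2 (volume : Measure ℝ)) : F (F g) = R g := by
  have hclosed : IsClosed {g : Lp ℂ 2 (volume : Measure ℝ) | F (F g) = R g} :=
    isClosed_eq (F.continuous.comp F.continuous) continuous_R
  have hsub : {g : Lp ℂ 2 (volume : Measure ℝ) | Nice g} ⊆
      {g : Lp ℂ 2 (volume : Measure ℝ) | F (F g) = R g} := by
    rintro g ⟨ψ, hc, hi, hfi, hg⟩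
    have h1 : (F g : ℝ → ℂ) =ᵐ[volume] 𝓕 ψ := bridge F hF hg hi
    have h2 : (F (F g) : ℝ → ℂ) =ᵐ[volume] 𝓕 (𝓕 ψ) := bridge F hF h1 hfi
    refine Lp.ext (h2.trans ?_)
    have h4 : ∀ᵐ x : ℝ ∂volume, (g : ℝ → ℂ) (-x) = ψ (-x) :=
      ae_comp_neg (by filter_upwards [hg] with x hx using hx)
    filter_upwards [coeFn_R g, h4] with x h3 h4'
    rw [fourier_invol ψ hc hi hfi x, h3, h4']
  have := hclosed.closure_subset_iff.mpr hsub
  exact this (dense_nice g)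

lemma F_C (g : Lp ℂ 2 (volume : Measure ℝ)) : F (C g) = C (R (F g)) := by
  have hclosed : IsClosed {g : Lp ℂ 2 (volume : Measure ℝ) | F (C g) = C (R (F g))} :=
    isClosed_eq (F.continuous.comp C.continuous)
      (C.continuous.comp (continuous_R.comp F.continuous))
  have hsub : {g : Lp ℂ 2 (volume : Measure ℝ) | Nice g} ⊆
      {g : Lp ℂ 2 (volume : Measure ℝ) | F (C g) = C (R (F g))} := by
    rintro g ⟨ψ, hc, hi, hfi, hg⟩
    have hCg : ((C g : Lp ℂ 2 (volume : Measure ℝ)) : ℝ → ℂ) =ᵐ[volume]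
        fun x => (starRingEnd ℂ) (ψ x) := by
      filter_upwards [coeFn_C g, hg] with x h1 h2
      rw [h1, h2]
    have hiconj : Integrable (fun x => (starRingEnd ℂ) (ψ x)) volume :=
      (Complex.conjCLE.toContinuousLinearMap : ℂ →L[ℝ] ℂ).integrable_comp hi
    have h1 : (F (C g) : ℝ → ℂ) =ᵐ[volume] 𝓕 (fun x => (starRingEnd ℂ) (ψ x)) :=
      bridge F hF hCg hiconj
    refine Lp.ext (h1.trans ?_)
    have h2 : (F g : ℝ → ℂ) =ᵐ[volume] 𝓕 ψ := bridge F hF hg hi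
    have h3 : ∀ᵐ x : ℝ ∂volume, (F g : ℝ → ℂ) (-x) = 𝓕 ψ (-x) :=
      ae_comp_neg (by filter_upwards [h2] with x hx using hx)
    filter_upwards [coeFn_C (R (F g)), coeFn_R (F g), h3] with x hx1 hx2 hx3
    rw [fourier_conj, hx1]
    have : ((R (F g) : Lp ℂ 2 (volume : Measure ℝ)) : ℝ → ℂ) x = 𝓕 ψ (-x) := by
      rw [hx2]; exact hx3
    rw [this]
  have := hclosed.closure_subset_iff.mpr hsub
  exact this (dense_nice g)

end Ops

section Alg

lemma C_C (g : Lp ℂ 2 (volume : Measure ℝ)) : C (C g) = g := by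
  refine Lp.ext ?_
  filter_upwards [coeFn_C (C g), coeFn_C g] with x h1 h2
  rw [h1, h2, Complex.conj_conj]

lemma R_R (g : Lp ℂ 2 (volume : Measure ℝ)) : R (R g) = g := by
  refine Lp.ext ?_
  have h2 : ∀ᵐ x : ℝ ∂volume, (R g : ℝ → ℂ) (-x) = (g : ℝ → ℂ) (- -x) :=
    ae_comp_neg (by filter_upwards [coeFn_R g] with x hx using hx)
  filter_upwards [coeFn_R (R g), h2] with x h1 h2'
  rw [h1, h2', neg_neg]

end Alg

end TitchAux

open TitchAux

/-- Titchmarsh relations for causal functions.  Here `F` is the Fourier–Plancherel transform on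
`L²(ℝ, ℂ)`: a unitary map agreeing on integrable functions with
`𝔉f(ξ) = ∫_ℝ e^{-2πixξ} f(x) dx`.  Let `f ∈ L²(ℝ, ℂ)` be real-valued a.e. and vanish a.e. on
`(−∞, 0)`.  Let `u, v ∈ L²(ℝ, ℂ)` represent the (real-valued) real and imaginary parts of
`𝔉f`, and let `Hu`, `Hv` be their Hilbert transforms (characterized by
`F(Hu) = -i·sgn·(Fu)` a.e., resp. for `v`).  Then `Im 𝔉f = −H(Re 𝔉f)` and
`Re 𝔉f = H(Im 𝔉f)` as elements of `L²`, i.e. `v = -Hu` and `u = Hv`. -/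
theorem titchmarsh_relations
    (F : Lp ℂ 2 (volume : Measure ℝ) ≃ₗᵢ[ℂ] Lp ℂ 2 (volume : Measure ℝ))
    (hF : ∀ f : Lp ℂ 2 (volume : Measure ℝ), Integrable (f : ℝ → ℂ) volume →
      (F f : ℝ → ℂ) =ᵐ[volume]
        fun ξ : ℝ => ∫ x : ℝ, Complex.exp (-2 * Real.pi * x * ξ * Complex.I) * f x)
    (f : Lp ℂ 2 (volume : Measure ℝ))
    (hreal : ∀ᵐ x : ℝ ∂volume, ((f : ℝ → ℂ) x).im = 0)
    (hvanish : ∀ᵐ x : ℝ ∂volume, x < 0 → (f : ℝ → ℂ) x = 0)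
    (u v Hu Hv : Lp ℂ 2 (volume : Measure ℝ))
    (hu : (u : ℝ → ℂ) =ᵐ[volume] fun ξ : ℝ => (((F f : ℝ → ℂ) ξ).re : ℂ))
    (hv : (v : ℝ → ℂ) =ᵐ[volume] fun ξ : ℝ => (((F f : ℝ → ℂ) ξ).im : ℂ))
    (hHu : (F Hu : ℝ → ℂ) =ᵐ[volume]
      fun ξ : ℝ => -Complex.I * (Real.sign ξ : ℝ) * (F u : ℝ → ℂ) ξ)
    (hHv : (F Hv : ℝ → ℂ) =ᵐ[volume]
      fun ξ : ℝ => -Complex.I * (Real.sign ξ : ℝ) * (F v : ℝ → ℂ) ξ) :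
    v = -Hu ∧ u = Hv := by
  classical
  set Φ : Lp ℂ 2 (volume : Measure ℝ) := F f with hΦ
  -- f is real, so C f = f
  have hCf : C f = f := by
    refine Lp.ext ?_
    filter_upwards [coeFn_C f, hreal] with x h1 h2
    rw [h1, Complex.conj_eq_iff_im.2 h2]
  -- the reality relation : C Φ = R Φ
  have hCΦ : C Φ = R Φ := by
    have h1 : F (C f) = C (R Φ) := F_C F hF f
    rw [hCf] at h1
    have h2 : C Φ = C (C (R Φ)) := by rw [← h1]
    rwa [C_C] at h2
  -- pointwise conjugation identity
  have hconj : ∀ᵐ ξ : ℝ ∂volume, (starRingEnd ℂ) ((Φ : ℝ → ℂ) ξ) = (Φ : ℝ → ℂ) (-ξ) := by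
    have h0 : ((C Φ : Lp ℂ 2 (volume : Measure ℝ)) : ℝ → ℂ)
        =ᵐ[volume] ((R Φ : Lp ℂ 2 (volume : Measure ℝ)) : ℝ → ℂ) := by rw [hCΦ]
    filter_upwards [coeFn_C Φ, coeFn_R Φ, h0] with ξ h1 h2 h3
    rw [← h1, h3, h2]
  -- identify u and v as explicit combinations
  have hu2 : u = (2⁻¹ : ℂ) • (Φ + R Φ) := by
    refine Lp.ext ?_
    filter_upwards [hu, Lp.coeFn_smul (2⁻¹ : ℂ) (Φ + R Φ), Lp.coeFn_add Φ (R Φ),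
      coeFn_R Φ, hconj] with ξ h1 h2 h3 h4 h5
    rw [h1, h2]
    simp only [Pi.smul_apply, h3, Pi.add_apply, h4, ← h5, smul_eq_mul]
    rw [Complex.add_conj]
    push_cast
    ring
  have hv2 : v = (-(Complex.I)/2) • (Φ - R Φ) := by
    refine Lp.ext ?_
    filter_upwards [hv, Lp.coeFn_smul (-(Complex.I)/2) (Φ - R Φ), Lp.coeFn_sub Φ (R Φ),
      coeFn_R Φ, hconj] with ξ h1 h2 h3 h4 h5
    rw [h1, h2]
    simp only [Pi.smul_apply, h3, Pi.sub_apply, h4, ← h5, smul_eq_mul]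
    rw [Complex.sub_conj]
    push_cast
    linear_combination (((Φ : ℝ → ℂ) ξ).im : ℂ) * Complex.I_mul_I
  -- compute F of the pieces
  have hFΦ : F Φ = R f := F_F F hF f
  have hFRΦ : F (R Φ) = f := by
    have h1 : R Φ = F (F Φ) := (F_F F hF Φ).symm
    rw [h1, F_F F hF (F Φ), hFΦ, R_R]
  have hFu : F u = (2⁻¹ : ℂ) • (R f + f) := by
    rw [hu2, _root_.map_smul, map_add, hFΦ, hFRΦ]
  have hFv : F v = (-(Complex.I)/2) • (R f - f) := by
    rw [hv2, _root_.map_smul, map_sub, hFΦ, hFRΦ]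
  -- a.e. facts
  have hvneg : ∀ᵐ ξ : ℝ ∂volume, 0 < ξ → (f : ℝ → ℂ) (-ξ) = 0 := by
    have := ae_comp_neg hvanish
    filter_upwards [this] with ξ h hpos
    exact h (by linarith)
  have hne : ∀ᵐ ξ : ℝ ∂volume, ξ ≠ 0 := by
    rw [MeasureTheory.ae_iff]
    simpa using Real.volume_singleton (a := (0:ℝ))
  have hcFu : (F u : ℝ → ℂ) =ᵐ[volume]
      fun ξ => (2⁻¹ : ℂ) * ((f : ℝ → ℂ) (-ξ) + (f : ℝ → ℂ) ξ) := by
    rw [hFu]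
    filter_upwards [Lp.coeFn_smul (2⁻¹ : ℂ) (R f + f), Lp.coeFn_add (R f) f, coeFn_R f]
      with ξ h1 h2 h3
    rw [h1]
    simp only [Pi.smul_apply, h2, Pi.add_apply, h3, smul_eq_mul]
  have hcFv : (F v : ℝ → ℂ) =ᵐ[volume]
      fun ξ => (-(Complex.I)/2) * ((f : ℝ → ℂ) (-ξ) - (f : ℝ → ℂ) ξ) := by
    rw [hFv]
    filter_upwards [Lp.coeFn_smul (-(Complex.I)/2) (R f - f), Lp.coeFn_sub (R f) f, coeFn_R f]
      with ξ h1 h2 h3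
    rw [h1]
    simp only [Pi.smul_apply, h2, Pi.sub_apply, h3, smul_eq_mul]
  constructor
  · -- v = -Hu
    apply F.injective
    rw [map_neg]
    refine Lp.ext ?_
    filter_upwards [hcFv, hHu, Lp.coeFn_neg (F Hu), hcFu, hvanish, hvneg, hne]
      with ξ h1 h2 h3 h4 h5 h6 h7
    rw [h1, h3]
    simp only [Pi.neg_apply]
    rw [h2, h4]
    rcases lt_trichotomy ξ 0 with hlt | heq | hgt
    · rw [Real.sign_of_neg hlt, h5 hlt]
      push_cast
      ring
    · exact absurd heq h7
    · rw [Real.sign_of_pos hgt, h6 hgt]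
      push_cast
      ring
  · -- u = Hv
    apply F.injective
    refine Lp.ext ?_
    filter_upwards [hcFu, hHv, hcFv, hvanish, hvneg, hne]
      with ξ h1 h2 h3 h4 h5 h6
    rw [h1, h2, h3]
    rcases lt_trichotomy ξ 0 with hlt | heq | hgt
    · rw [Real.sign_of_neg hlt, h4 hlt]
      push_cast
      linear_combination (((f : ℝ → ℂ) (-ξ)) / 2) * Complex.I_mul_I
    · exact absurd heq h6
    · rw [Real.sign_of_pos hgt, h5 hgt]
      push_cast
      linear_combination (((f : ℝ → ℂ) ξ) / 2) * Complex.I_mul_I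
end TitchAux
end
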